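/- Let R be a left noetherian ring. Then every absolutely pure left R-module is injective. -/

import Mathlib

universe u v

/-- A submodule `A ≤ M` is pure if every finite system of `R`-linear equations with
parameters in `A` that is solvable in `M` is solvable in `A`. -/
def IsPureSubmodule (R : Type u) [Ring R] {M : Type v} [AddCommGroup M] [Module R M]
    (A : Submodule R M) : Prop :=
  ∀ (k n : ℕ) (c : Fin k → Fin n → R) (a : Fin k → M),
    (∀ i, a i ∈ A) →
    (∃ x : Fin n → M, ∀ i, (∑ j, c i j • x j) = a i) →
    ∃ x : Fin n → M, (∀ j, x j ∈ A) ∧ ∀ i, (∑ j, c i j • x j) = a i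

/-- A linear map is a pure embedding if it is injective and its range is a pure submodule. -/
def IsPureEmbedding (R : Type u) [Ring R] {M N : Type v} [AddCommGroup M] [Module R M]
    [AddCommGroup N] [Module R N] (f : M →ₗ[R] N) : Prop :=
  Function.Injective f ∧ IsPureSubmodule R (LinearMap.range f)

/-- A module is pure-injective if it is a direct summand of every module containing it
as a pure submodule, i.e. every pure embedding out of it admits a retraction. -/
def IsPureInjective (R : Type u) [Ring R] (M : Type v) [AddCommGroup M] [Module R M] : Prop :=
  ∀ (N : Type v) [AddCommGroup N] [Module R N] (f : M →ₗ[R] N),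
    IsPureEmbedding R f → ∃ g : N →ₗ[R] M, g ∘ₗ f = LinearMap.id

/-- A module is absolutely pure if it is pure in every module containing it. -/
def IsAbsolutelyPure (R : Type u) [Ring R] (M : Type v) [AddCommGroup M] [Module R M] : Prop :=
  ∀ (N : Type v) [AddCommGroup N] [Module R N] (f : M →ₗ[R] N),
    Function.Injective f → IsPureSubmodule R (LinearMap.range f)

/-- over a left noetherian ring, every absolutely pure module is injective. -/
theorem stmt11 (R : Type u) [Ring R] [IsNoetherianRing R]
    (M : Type u) [AddCommGroup M] [Module R M]
    (h : IsAbsolutelyPure R M) :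
    Module.Injective R M := by
  -- Embed M into an injective module E.
  let E := CategoryTheory.Injective.under (ModuleCat.of R M)
  let ι : M →ₗ[R] E := (CategoryTheory.Injective.ι (ModuleCat.of R M) : ModuleCat.of R M ⟶ E).hom
  have hι : Function.Injective ι :=
    (ModuleCat.mono_iff_injective (CategoryTheory.Injective.ι (ModuleCat.of R M))).mp
      inferInstance
  have hEinj : Module.Injective R E :=
    @Module.injective_module_of_injective_object R E _ _ _
      (inferInstanceAs (CategoryTheory.Injective E))
  -- Baer's criterion for M
  apply Module.Baer.injective
  intro I f
  obtain ⟨n, s, hs⟩ := Submodule.fg_iff_exists_fin_generating_family.mp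
    (IsNoetherian.noetherian I)
  -- extend ι ∘ f along I ↪ R to g : R →ₗ E
  obtain ⟨g, hg⟩ := hEinj.out I.subtype Subtype.coe_injective (ι.comp f)
  have hsmem : ∀ i, s i ∈ I := fun i => hs ▸ Submodule.subset_span ⟨i, rfl⟩
  -- purity of range ι in E: solve s i • x = ι (f (s i)) in range ι
  obtain ⟨x, hxmem, hxeq⟩ := h E ι hι n 1 (fun i _ => s i)
    (fun i => ι (f ⟨s i, hsmem i⟩)) (fun i => ⟨_, rfl⟩)
    ⟨fun _ => g 1, by
      intro i
      simp only [Fin.sum_univ_one]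
      rw [← g.map_smul, smul_eq_mul, mul_one]
      exact (hg ⟨s i, hsmem i⟩)⟩
  obtain ⟨m, hm⟩ := hxmem 0
  refine ⟨LinearMap.toSpanSingleton R M m, fun r hr => ?_⟩
  apply hι
  have key : ∀ i, s i • x 0 = ι (f ⟨s i, hsmem i⟩) := fun i => by
    simpa [Fin.sum_univ_one] using hxeq i
  -- write r as a combination of the generators
  have hrmem : r ∈ Submodule.span R (Set.range s) := hs ▸ hr
  obtain ⟨c, hrc⟩ := (Submodule.mem_span_range_iff_exists_fun R).mp hrmem
  have hIc : (⟨r, hr⟩ : I) = ∑ i, c i • (⟨s i, hsmem i⟩ : I) := by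
    apply Subtype.ext
    simp [← hrc]
  calc ι (LinearMap.toSpanSingleton R M m r) = r • ι m := by
        simp [LinearMap.toSpanSingleton, LinearMap.map_smul]
    _ = r • x 0 := by rw [hm]
    _ = ∑ i, c i • (s i • x 0) := by
        rw [← hrc, Finset.sum_smul]
        simp [mul_smul]
    _ = ι (f ⟨r, hr⟩) := by
        simp_rw [key, ← map_smul]
        rw [hIc, map_sum, map_sum]
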